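/- arXiv:1602.04381 — 6 statements merged into one kernel-verified Lean document; each statement's English description precedes it below -/
import Mathlib

section
/- For all integers x ≥ 2 and y ≥ 1, (1 + y(1+√2))/√(x² + y²) ≤ √((1+√2)² + 1/4), and this last quantity is strictly less than (3 + 2√2)/√5. -/
theorem stmt_4 (x y : ℤ) (hx : 2 ≤ x) (hy : 1 ≤ y) :
    (1 + (y : ℝ) * (1 + Real.sqrt 2)) / Real.sqrt ((x : ℝ) ^ 2 + (y : ℝ) ^ 2) ≤
      Real.sqrt ((1 + Real.sqrt 2) ^ 2 + 1 / 4) ∧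
    Real.sqrt ((1 + Real.sqrt 2) ^ 2 + 1 / 4) < (3 + 2 * Real.sqrt 2) / Real.sqrt 5 := by
  have s2 : Real.sqrt 2 ^ 2 = 2 := Real.sq_sqrt (by norm_num)
  have s2ge : (1:ℝ) ≤ Real.sqrt 2 := by
    rw [show (1:ℝ) = Real.sqrt 1 by simp]
    exact Real.sqrt_le_sqrt (by norm_num)
  have hxr : (2:ℝ) ≤ (x:ℝ) := by exact_mod_cast hx
  have hyr : (1:ℝ) ≤ (y:ℝ) := by exact_mod_cast hy
  constructor
  · rw [div_le_iff₀ (Real.sqrt_pos.mpr (by nlinarith))]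
    rw [← Real.sqrt_mul (by nlinarith)]
    rw [Real.le_sqrt (by nlinarith)]
    · nlinarith [sq_nonneg ((y:ℝ) - 4*(1+Real.sqrt 2)), sq_nonneg ((x:ℝ) - 2), s2ge, s2, hxr, hyr]
    · positivity
  · have h5 : (3 + 2*Real.sqrt 2) / Real.sqrt 5 = Real.sqrt ((3 + 2*Real.sqrt 2)^2 / 5) := by
      rw [Real.sqrt_div (by positivity), Real.sqrt_sq (by positivity)]
    rw [h5]
    apply Real.sqrt_lt_sqrt (by positivity)
    nlinarith [s2, s2ge]
end

section
/- For every positive integer y, (1 + y(1+√2))/√(1 + y²) ≤ (3 + 2√2)/√5, with equality when y = 2. -/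
theorem stmt_6 (y : ℕ) (hy : 1 ≤ y) :
    (1 + (y : ℝ) * (1 + Real.sqrt 2)) / Real.sqrt (1 + (y : ℝ) ^ 2) ≤
      (3 + 2 * Real.sqrt 2) / Real.sqrt 5 ∧
    (y = 2 →
      (1 + (y : ℝ) * (1 + Real.sqrt 2)) / Real.sqrt (1 + (y : ℝ) ^ 2) =
        (3 + 2 * Real.sqrt 2) / Real.sqrt 5) := by
  have s2 : Real.sqrt 2 ^ 2 = 2 := Real.sq_sqrt (by norm_num)
  have s2pos : (0:ℝ) < Real.sqrt 2 := Real.sqrt_pos.mpr (by norm_num)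
  have hy1 : (1:ℝ) ≤ (y:ℝ) := by exact_mod_cast hy
  set b := Real.sqrt (1 + (y:ℝ)^2) with hb
  have hbpos : 0 < b := Real.sqrt_pos.mpr (by positivity)
  have hb2 : b ^ 2 = 1 + (y:ℝ)^2 := Real.sq_sqrt (by positivity)
  have d2 : Real.sqrt 5 ^ 2 = 5 := Real.sq_sqrt (by norm_num)
  have dpos : (0:ℝ) < Real.sqrt 5 := Real.sqrt_pos.mpr (by norm_num)
  constructor
  · rw [div_le_div_iff₀ hbpos dpos]
    have key : (0:ℝ) ≤ ((y:ℝ) - 2) * ((y:ℝ) - 3) := by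
      rcases le_or_gt y 2 with h | h
      · have : (y:ℝ) ≤ 2 := by exact_mod_cast h
        nlinarith
      · have : (3:ℝ) ≤ (y:ℝ) := by exact_mod_cast h
        nlinarith
    -- squared inequality: 5*(1+ay)^2 ≤ (17+12√2)*(1+y²)
    have hsq : (1 + (y:ℝ) * (1 + Real.sqrt 2)) ^ 2 * 5 ≤
        (3 + 2 * Real.sqrt 2) ^ 2 * (1 + (y:ℝ)^2) := by
      nlinarith [key, s2, s2pos.le, hy1, mul_nonneg key s2pos.le]
    have hA : (0:ℝ) ≤ 1 + (y:ℝ) * (1 + Real.sqrt 2) := by nlinarith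
    have hC : (0:ℝ) ≤ 3 + 2 * Real.sqrt 2 := by positivity
    have e1 : (1 + (y:ℝ) * (1 + Real.sqrt 2)) * Real.sqrt 5
        = Real.sqrt ((1 + (y:ℝ) * (1 + Real.sqrt 2)) ^ 2 * 5) := by
      rw [Real.sqrt_mul (sq_nonneg _), Real.sqrt_sq hA]
    have e2 : (3 + 2 * Real.sqrt 2) * b
        = Real.sqrt ((3 + 2 * Real.sqrt 2) ^ 2 * (1 + (y:ℝ)^2)) := by
      rw [Real.sqrt_mul (sq_nonneg _), Real.sqrt_sq hC, hb]
    rw [e1, e2]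
    exact Real.sqrt_le_sqrt hsq
  · intro h
    subst h
    rw [hb]
    push_cast
    norm_num
    ring_nf
end

section
/- For all real λ ≥ 1, (2λ + 1 + √3)/√(λ² + λ + 1) ≤ 1 + √3, with equality at λ = 1. -/
theorem stmt_7 :
    (∀ l : ℝ, 1 ≤ l →
      (2 * l + 1 + Real.sqrt 3) / Real.sqrt (l ^ 2 + l + 1) ≤ 1 + Real.sqrt 3) ∧
    (2 * (1 : ℝ) + 1 + Real.sqrt 3) / Real.sqrt ((1 : ℝ) ^ 2 + 1 + 1) = 1 + Real.sqrt 3 := by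
  have h3 : Real.sqrt 3 ^ 2 = 3 := Real.sq_sqrt (by norm_num)
  have h3n : (1:ℝ) ≤ Real.sqrt 3 := by
    nlinarith [Real.sqrt_nonneg 3]
  constructor
  · intro l hl
    have hpos : (0:ℝ) < l ^ 2 + l + 1 := by nlinarith
    have hs : Real.sqrt (l ^ 2 + l + 1) ^ 2 = l ^ 2 + l + 1 := Real.sq_sqrt hpos.le
    have hsp : 0 < Real.sqrt (l ^ 2 + l + 1) := Real.sqrt_pos.mpr hpos
    rw [div_le_iff₀ hsp]
    have key : (2 * l + 1 + Real.sqrt 3) ^ 2 ≤ ((1 + Real.sqrt 3) * Real.sqrt (l ^ 2 + l + 1)) ^ 2 := by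
      have : ((1 + Real.sqrt 3) * Real.sqrt (l ^ 2 + l + 1)) ^ 2
          = (1 + Real.sqrt 3) ^ 2 * (l ^ 2 + l + 1) := by rw [mul_pow, hs]
      rw [this]
      nlinarith [mul_nonneg (mul_nonneg (sub_nonneg.mpr hl) (Real.sqrt_nonneg 3)) (by linarith : (0:ℝ) ≤ l)]
    exact (pow_le_pow_iff_left₀ (by nlinarith) (by positivity) two_ne_zero).mp key
  · norm_num
    rw [show (3:ℝ) = Real.sqrt 3 ^ 2 from h3.symm, Real.sqrt_sq (by positivity)]
    field_simp
    nlinarith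
end

section
/- For all integers u ≥ v ≥ 0 with u ≥ 1 and v even, ((1 + √3/2)u + (√3/2)v + √3/2)/√(u² + v² + uv) ≤ 1 + √3. -/
theorem stmt_9 (u v : ℤ) (hv : 0 ≤ v) (huv : v ≤ u) (hu : 1 ≤ u) (heven : Even v) :
    ((1 + Real.sqrt 3 / 2) * u + (Real.sqrt 3 / 2) * v + Real.sqrt 3 / 2) /
        Real.sqrt ((u : ℝ) ^ 2 + (v : ℝ) ^ 2 + u * v) ≤ 1 + Real.sqrt 3 := by
  have hu' : (1 : ℝ) ≤ (u : ℝ) := by exact_mod_cast hu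
  have hv' : (0 : ℝ) ≤ (v : ℝ) := by exact_mod_cast hv
  have huv' : (v : ℝ) ≤ (u : ℝ) := by exact_mod_cast huv
  set E : ℝ := (u : ℝ) ^ 2 + (v : ℝ) ^ 2 + u * v with hE
  have hEpos : 0 < E := by nlinarith
  have hQpos : 0 < Real.sqrt E := Real.sqrt_pos.mpr hEpos
  have hs : (0:ℝ) ≤ Real.sqrt 3 := Real.sqrt_nonneg 3
  have h1 : (u : ℝ) ≤ Real.sqrt E := by
    rw [Real.le_sqrt (by linarith) hEpos.le]
    nlinarith
  have h2 : ((u : ℝ) + v + 1) / 2 ≤ Real.sqrt E := by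
    rw [Real.le_sqrt (by linarith) hEpos.le]
    nlinarith
  rw [div_le_iff₀ hQpos]
  nlinarith [mul_nonneg hs (sub_nonneg.mpr h2)]
end

section
/- For all integers x ≥ y ≥ 3 with y odd, ((1 + √2/2)x + (√2/2)y + (1 + √2/2))/√(x² + y²) ≤ √((1 + √2/2)² + ((1 + 2√2)/3)²), and this bound is strictly less than (3 + 2√2)/√5. -/
theorem stmt_14 (x y : ℤ) (hy : 3 ≤ y) (hxy : y ≤ x) (hodd : Odd y) :
    ((1 + Real.sqrt 2 / 2) * x + (Real.sqrt 2 / 2) * y + (1 + Real.sqrt 2 / 2)) /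
        Real.sqrt ((x : ℝ) ^ 2 + (y : ℝ) ^ 2) ≤
      Real.sqrt ((1 + Real.sqrt 2 / 2) ^ 2 + ((1 + 2 * Real.sqrt 2) / 3) ^ 2) ∧
    Real.sqrt ((1 + Real.sqrt 2 / 2) ^ 2 + ((1 + 2 * Real.sqrt 2) / 3) ^ 2) <
      (3 + 2 * Real.sqrt 2) / Real.sqrt 5 := by
  have hs : Real.sqrt 2 ^ 2 = 2 := Real.sq_sqrt (by norm_num)
  have hs0 : (0:ℝ) ≤ Real.sqrt 2 := Real.sqrt_nonneg 2
  have hs1 : (1:ℝ) < Real.sqrt 2 := by nlinarith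
  have hs2 : Real.sqrt 2 < 1.5 := by nlinarith
  set s := Real.sqrt 2 with hsdef
  have hy' : (3:ℝ) ≤ (y:ℝ) := by exact_mod_cast hy
  have hxy' : (y:ℝ) ≤ (x:ℝ) := by exact_mod_cast hxy
  have hB : (0:ℝ) < (x:ℝ) ^ 2 + (y:ℝ) ^ 2 := by nlinarith
  have hpos : 0 < Real.sqrt ((x:ℝ) ^ 2 + (y:ℝ) ^ 2) := Real.sqrt_pos.mpr hB
  have hA : (0:ℝ) ≤ (1 + s / 2) ^ 2 + ((1 + 2 * s) / 3) ^ 2 := by positivity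
  constructor
  · rw [div_le_iff₀ hpos, ← Real.sqrt_mul hA]
    have hM : (0:ℝ) ≤ (1 + s / 2) * x + (s / 2) * y + (1 + s / 2) := by nlinarith
    rw [show ((1 + s / 2) * x + (s / 2) * y + (1 + s / 2) : ℝ)
        = Real.sqrt (((1 + s / 2) * x + (s / 2) * y + (1 + s / 2)) ^ 2) from
        (Real.sqrt_sq hM).symm]
    apply Real.sqrt_le_sqrt
    have h1 : (1 + s / 2) * x + (s / 2) * y + (1 + s / 2)
        ≤ (1 + s / 2) * x + ((1 + 2 * s) / 3) * y := by nlinarith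
    nlinarith [sq_nonneg (((1 + 2 * s) / 3) * x - (1 + s / 2) * y),
      sq_nonneg ((1 + s / 2) * x + ((1 + 2 * s) / 3) * y)]
  · have h5 : Real.sqrt 5 ^ 2 = 5 := Real.sq_sqrt (by norm_num)
    have h5p : (0:ℝ) < Real.sqrt 5 := Real.sqrt_pos.mpr (by norm_num)
    rw [Real.sqrt_lt' (by positivity)]
    have he : ((3 + 2 * s) / Real.sqrt 5) ^ 2 = (3 + 2 * s) ^ 2 / 5 := by
      rw [div_pow, h5]
    rw [he]
    nlinarith
end

section
/- In any plane geometric graph of maximum degree 3 on the vertex set {(0,0), (1,0), (0,1), (-1,0), (0,-1), (1,1), (-1,1), (-1,-1), (1,-1)} ⊂ ℤ², some axis-aligned neighbor pair (p₀, p) with p ∈ {(1,0),(0,1),(-1,0),(0,-1)} and p₀ = (0,0) is not joined by an edge, and any path between them through a third point of the set has length at least 1 + √2; hence the stretch factor of any plane degree-3 spanner of the infinite square lattice is at least 1 + √2. -/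
/-- Euclidean distance in the plane. -/
noncomputable def ed (p q : ℝ × ℝ) : ℝ :=
  Real.sqrt ((p.1 - q.1) ^ 2 + (p.2 - q.2) ^ 2)

/-- Euclidean length of a polygonal path given by its vertex list. -/
noncomputable def pathLen : List (ℝ × ℝ) → ℝ
  | [] => 0
  | [_] => 0
  | p :: q :: rest => ed p q + pathLen (q :: rest)

/-- `xs` is a path from `u` to `v` in the geometric graph with edge relation `E`. -/
def IsPath (E : ℝ × ℝ → ℝ × ℝ → Prop) (u v : ℝ × ℝ) (xs : List (ℝ × ℝ)) : Prop :=
  xs.head? = some u ∧ xs.getLast? = some v ∧ xs.Chain' E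

/-- The edges of `E`, drawn as straight segments, pairwise do not cross:
edges sharing no endpoint have disjoint open segments. -/
def PlaneGraph (E : ℝ × ℝ → ℝ × ℝ → Prop) : Prop :=
  ∀ a b c d : ℝ × ℝ, E a b → E c d → ({a, b} : Set (ℝ × ℝ)) ∩ {c, d} = ∅ →
    openSegment ℝ a b ∩ openSegment ℝ c d = ∅

/-- The 9 points of the square lattice around the origin. -/
def nineSet : Set (ℝ × ℝ) :=
  {(0, 0), (1, 0), (0, 1), (-1, 0), (0, -1), (1, 1), (-1, 1), (-1, -1), (1, -1)}

/-- The square lattice ℤ² as a subset of the plane. -/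
def sqLattice : Set (ℝ × ℝ) := {p | ∃ m n : ℤ, p = ((m : ℝ), (n : ℝ))}

namespace S17

noncomputable def ii (a : ℤ × ℤ) : ℝ × ℝ := ((a.1 : ℝ), (a.2 : ℝ))

lemma ii_mem : ∀ a, ii a ∈ sqLattice := fun a => ⟨a.1, a.2, rfl⟩

lemma ed_eq_dist (p q : ℝ × ℝ) :
    ed p q = dist (Complex.mk p.1 p.2) (Complex.mk q.1 q.2) := by
  rw [Complex.dist_mk]; rfl

lemma ed_triangle (p q r : ℝ × ℝ) : ed p r ≤ ed p q + ed q r := by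
  rw [ed_eq_dist, ed_eq_dist, ed_eq_dist]; exact dist_triangle _ _ _

lemma ed_self (p : ℝ × ℝ) : ed p p = 0 := by simp [ed]

lemma ed_symm (p q : ℝ × ℝ) : ed p q = ed q p := by
  rw [ed_eq_dist, ed_eq_dist]; exact dist_comm _ _

lemma ed_nonneg (p q : ℝ × ℝ) : 0 ≤ ed p q := Real.sqrt_nonneg _

lemma sqrt2_le_two : Real.sqrt 2 ≤ 2 := by
  nlinarith [Real.sq_sqrt (show (0:ℝ) ≤ 2 by norm_num), Real.sqrt_nonneg 2]

lemma one_le_sqrt5 : (1:ℝ) ≤ Real.sqrt 5 := by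
  rw [show (1:ℝ) = Real.sqrt 1 by simp]
  exact Real.sqrt_le_sqrt (by norm_num)

lemma pathLen_nonneg : ∀ xs : List (ℝ × ℝ), 0 ≤ pathLen xs
  | [] => le_refl 0
  | [_] => le_refl 0
  | p :: q :: rest => by
      rw [pathLen]
      have := pathLen_nonneg (q :: rest)
      have := ed_nonneg p q
      linarith

lemma pathLen_ge : ∀ (xs : List (ℝ × ℝ)) (a b : ℝ × ℝ),
    xs.head? = some a → xs.getLast? = some b → ed a b ≤ pathLen xs
  | [], a, b => by intro h; simp at h
  | [x], a, b => by
      intro h1 h2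
      simp only [List.head?_cons, Option.some.injEq] at h1
      simp only [List.getLast?_singleton, Option.some.injEq] at h2
      subst h1; subst h2
      simp [pathLen, ed_self]
  | x :: y :: rest, a, b => by
      intro h1 h2
      simp only [List.head?_cons, Option.some.injEq] at h1
      subst h1
      rw [List.getLast?_cons_cons] at h2
      have ih := pathLen_ge (y :: rest) y b rfl h2
      have tri := ed_triangle x y b
      rw [pathLen]
      linarith

lemma sqrt_four : Real.sqrt 4 = 2 := by
  rw [show (4:ℝ) = 2^2 by norm_num, Real.sqrt_sq (by norm_num : (0:ℝ) ≤ 2)]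

lemma nine_ineq : ∀ p ∈ ({(1, 0), (0, 1), (-1, 0), (0, -1)} : Set (ℝ × ℝ)),
    ∀ r ∈ nineSet, r ≠ (0, 0) → r ≠ p →
      1 + Real.sqrt 2 ≤ ed (0, 0) r + ed r p := by
  have h2 := sqrt2_le_two
  have h5 := one_le_sqrt5
  have h2n := Real.sqrt_nonneg 2
  intro p hp r hr h0 hpr
  simp only [Set.mem_insert_iff, Set.mem_singleton_iff, nineSet] at hp hr
  rcases hp with rfl | rfl | rfl | rfl <;>
    rcases hr with rfl | rfl | rfl | rfl | rfl | rfl | rfl | rfl | rfl <;>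
      first
      | exact absurd rfl h0
      | exact absurd rfl hpr
      | (norm_num [ed, Real.sqrt_one, sqrt_four]; try linarith)

lemma nineSet_finite : nineSet.Finite := by
  unfold nineSet
  repeat' apply Set.Finite.insert
  exact Set.finite_singleton _

lemma part1 (E : ℝ × ℝ → ℝ × ℝ → Prop)
    (hV : ∀ p q, E p q → p ∈ nineSet ∧ q ∈ nineSet)
    (hdeg : ∀ p, {q | E p q}.ncard ≤ 3) :
    ∃ p ∈ ({(1, 0), (0, 1), (-1, 0), (0, -1)} : Set (ℝ × ℝ)),
      ¬ E (0, 0) p ∧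
      ∀ r ∈ nineSet, r ≠ (0, 0) → r ≠ p →
        1 + Real.sqrt 2 ≤ ed (0, 0) r + ed r p := by
  have hmiss : ∃ p ∈ ({(1, 0), (0, 1), (-1, 0), (0, -1)} : Set (ℝ × ℝ)), ¬ E (0, 0) p := by
    by_contra h
    push_neg at h
    have hsub : ({(1, 0), (0, 1), (-1, 0), (0, -1)} : Set (ℝ × ℝ)) ⊆ {q | E (0, 0) q} := by
      intro q hq; exact h q hq
    have hsub9 : {q | E (0, 0) q} ⊆ nineSet := fun q hq => (hV _ _ hq).2
    have c4 : ({(1, 0), (0, 1), (-1, 0), (0, -1)} : Set (ℝ × ℝ)).ncard = 4 := by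
      rw [Set.ncard_insert_of_notMem (by norm_num [Prod.ext_iff])
            (Set.Finite.insert _ (Set.Finite.insert _ (Set.finite_singleton _))),
          Set.ncard_insert_of_notMem (by norm_num [Prod.ext_iff])
            (Set.Finite.insert _ (Set.finite_singleton _)),
          Set.ncard_insert_of_notMem (by norm_num [Prod.ext_iff]) (Set.finite_singleton _),
          Set.ncard_singleton]
    have hle : 4 ≤ ({q | E (0, 0) q}).ncard := by
      rw [← c4]
      exact Set.ncard_le_ncard hsub (nineSet_finite.subset hsub9)
    have := hdeg (0, 0)
    omega
  obtain ⟨p, hp, hnp⟩ := hmiss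
  exact ⟨p, hp, hnp, nine_ineq p hp⟩
lemma ed_ii (a b : ℤ × ℤ) :
    ed (ii a) (ii b)
      = Real.sqrt ((((a.1 - b.1 : ℤ)) : ℝ)^2 + (((a.2 - b.2 : ℤ)) : ℝ)^2) := by
  unfold ed ii
  push_cast
  ring_nf

lemma one_le_sqrt_int (s : ℤ) (h : 1 ≤ s) : (1:ℝ) ≤ Real.sqrt ((s:ℝ)) := by
  rw [show (1:ℝ) = Real.sqrt 1 by simp]
  apply Real.sqrt_le_sqrt; exact_mod_cast h

lemma two_le_sqrt_int (s : ℤ) (h : 4 ≤ s) : (2:ℝ) ≤ Real.sqrt ((s:ℝ)) := by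
  rw [show (2:ℝ) = Real.sqrt 4 from sqrt_four.symm]
  apply Real.sqrt_le_sqrt; exact_mod_cast h

lemma int_sum_sq_pos (a b : ℤ) (h : ¬(a = 0 ∧ b = 0)) : 1 ≤ a^2 + b^2 := by
  by_cases ha : a = 0
  · have hb : b ≠ 0 := fun hb => h ⟨ha, hb⟩
    have := Int.one_le_abs hb
    nlinarith [sq_abs b, abs_nonneg b, sq_nonneg a]
  · have := Int.one_le_abs ha
    nlinarith [sq_abs a, abs_nonneg a, sq_nonneg b]

lemma ell_core (m n : ℤ) (h0 : ¬(m = 0 ∧ n = 0)) (h1 : ¬(m = 1 ∧ n = 0)) :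
    1 + Real.sqrt 2 ≤ Real.sqrt ((m:ℝ)^2 + (n:ℝ)^2)
      + Real.sqrt (((m:ℝ) - 1)^2 + (n:ℝ)^2) := by
  have hc1 : Real.sqrt ((m:ℝ)^2 + (n:ℝ)^2) = Real.sqrt (((m^2 + n^2 : ℤ)):ℝ) := by
    push_cast; ring_nf
  have hc2 : Real.sqrt (((m:ℝ) - 1)^2 + (n:ℝ)^2)
      = Real.sqrt ((((m-1)^2 + n^2 : ℤ)):ℝ) := by push_cast; ring_nf
  by_cases hbig : 4 ≤ m^2 + n^2
  · have t1 : (2:ℝ) ≤ Real.sqrt ((m:ℝ)^2 + (n:ℝ)^2) := hc1 ▸ two_le_sqrt_int _ hbig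
    have t2 : (1:ℝ) ≤ Real.sqrt (((m:ℝ) - 1)^2 + (n:ℝ)^2) :=
      hc2 ▸ one_le_sqrt_int _ (int_sum_sq_pos _ _ (by rintro ⟨h, h'⟩; exact h1 ⟨by omega, h'⟩))
    linarith [sqrt2_le_two]
  · by_cases hbig2 : 4 ≤ (m-1)^2 + n^2
    · have t1 : (1:ℝ) ≤ Real.sqrt ((m:ℝ)^2 + (n:ℝ)^2) :=
        hc1 ▸ one_le_sqrt_int _ (int_sum_sq_pos _ _ h0)
      have t2 : (2:ℝ) ≤ Real.sqrt (((m:ℝ) - 1)^2 + (n:ℝ)^2) := hc2 ▸ two_le_sqrt_int _ hbig2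
      linarith [sqrt2_le_two]
    · push_neg at hbig hbig2
      have hm1 : -1 ≤ m := by nlinarith [sq_nonneg n, sq_nonneg m]
      have hm2 : m ≤ 2 := by nlinarith [sq_nonneg n, sq_nonneg (m-1)]
      have hn1 : -1 ≤ n := by nlinarith [sq_nonneg m, sq_nonneg n]
      have hn2 : n ≤ 1 := by nlinarith [sq_nonneg m, sq_nonneg n]
      interval_cases m <;> interval_cases n <;>
        first
        | (exfalso; omega)
        | (exfalso; exact h0 ⟨rfl, rfl⟩)
        | (exfalso; exact h1 ⟨rfl, rfl⟩)
        | (norm_num [Real.sqrt_one]; try linarith [sqrt2_le_two, one_le_sqrt5, Real.sqrt_nonneg 2])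
lemma unit_cases (u v : ℤ × ℤ) (huv : (v.1 - u.1)^2 + (v.2 - u.2)^2 = 1) :
    (v.1 - u.1 = 1 ∧ v.2 - u.2 = 0) ∨ (v.1 - u.1 = -1 ∧ v.2 - u.2 = 0) ∨
    (v.1 - u.1 = 0 ∧ v.2 - u.2 = 1) ∨ (v.1 - u.1 = 0 ∧ v.2 - u.2 = -1) := by
  have h1 : (v.1 - u.1)^2 ≤ 1 := by nlinarith [sq_nonneg (v.2 - u.2)]
  have h2 : (v.2 - u.2)^2 ≤ 1 := by nlinarith [sq_nonneg (v.1 - u.1)]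
  have hb1 : -1 ≤ v.1 - u.1 ∧ v.1 - u.1 ≤ 1 := by constructor <;> nlinarith
  have hb2 : -1 ≤ v.2 - u.2 ∧ v.2 - u.2 ≤ 1 := by constructor <;> nlinarith
  obtain ⟨a1, a2⟩ := hb1
  obtain ⟨b1, b2⟩ := hb2
  set a := v.1 - u.1 with ha
  set b := v.2 - u.2 with hb
  clear_value a b
  interval_cases a <;> interval_cases b <;> omega

lemma ell (u v r : ℤ × ℤ) (huv : (v.1 - u.1)^2 + (v.2 - u.2)^2 = 1)
    (hru : r ≠ u) (hrv : r ≠ v) :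
    1 + Real.sqrt 2 ≤ ed (ii u) (ii r) + ed (ii r) (ii v) := by
  have hru' : ¬(r.1 = u.1 ∧ r.2 = u.2) := by
    rintro ⟨h1, h2⟩; exact hru (Prod.ext h1 h2)
  have hrv' : ¬(r.1 = v.1 ∧ r.2 = v.2) := by
    rintro ⟨h1, h2⟩; exact hrv (Prod.ext h1 h2)
  rw [ed_ii, ed_ii]
  rcases unit_cases u v huv with ⟨c1, c2⟩ | ⟨c1, c2⟩ | ⟨c1, c2⟩ | ⟨c1, c2⟩
  · have e1 : (((u.1 - r.1 : ℤ)) : ℝ)^2 + (((u.2 - r.2 : ℤ)) : ℝ)^2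
        = ((r.1 - u.1 : ℤ) : ℝ)^2 + ((r.2 - u.2 : ℤ) : ℝ)^2 := by push_cast; ring
    have e2 : (((r.1 - v.1 : ℤ)) : ℝ)^2 + (((r.2 - v.2 : ℤ)) : ℝ)^2
        = (((r.1 - u.1 : ℤ) : ℝ) - 1)^2 + ((r.2 - u.2 : ℤ) : ℝ)^2 := by
      have : v.1 = u.1 + 1 := by omega
      have : v.2 = u.2 := by omega
      push_cast [*]; ring
    rw [e1, e2]
    exact ell_core _ _ (by push_neg; intro h h'; omega) (by push_neg; intro h h'; omega)
  · have e1 : (((u.1 - r.1 : ℤ)) : ℝ)^2 + (((u.2 - r.2 : ℤ)) : ℝ)^2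
        = ((u.1 - r.1 : ℤ) : ℝ)^2 + ((r.2 - u.2 : ℤ) : ℝ)^2 := by push_cast; ring
    have e2 : (((r.1 - v.1 : ℤ)) : ℝ)^2 + (((r.2 - v.2 : ℤ)) : ℝ)^2
        = (((u.1 - r.1 : ℤ) : ℝ) - 1)^2 + ((r.2 - u.2 : ℤ) : ℝ)^2 := by
      have : v.1 = u.1 - 1 := by omega
      have : v.2 = u.2 := by omega
      push_cast [*]; ring
    rw [e1, e2]
    exact ell_core _ _ (by push_neg; intro h h'; omega) (by push_neg; intro h h'; omega)
  · have e1 : (((u.1 - r.1 : ℤ)) : ℝ)^2 + (((u.2 - r.2 : ℤ)) : ℝ)^2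
        = ((r.2 - u.2 : ℤ) : ℝ)^2 + ((r.1 - u.1 : ℤ) : ℝ)^2 := by push_cast; ring
    have e2 : (((r.1 - v.1 : ℤ)) : ℝ)^2 + (((r.2 - v.2 : ℤ)) : ℝ)^2
        = (((r.2 - u.2 : ℤ) : ℝ) - 1)^2 + ((r.1 - u.1 : ℤ) : ℝ)^2 := by
      have : v.2 = u.2 + 1 := by omega
      have : v.1 = u.1 := by omega
      push_cast [*]; ring
    rw [e1, e2]
    exact ell_core _ _ (by push_neg; intro h h'; omega) (by push_neg; intro h h'; omega)
  · have e1 : (((u.1 - r.1 : ℤ)) : ℝ)^2 + (((u.2 - r.2 : ℤ)) : ℝ)^2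
        = ((u.2 - r.2 : ℤ) : ℝ)^2 + ((r.1 - u.1 : ℤ) : ℝ)^2 := by push_cast; ring
    have e2 : (((r.1 - v.1 : ℤ)) : ℝ)^2 + (((r.2 - v.2 : ℤ)) : ℝ)^2
        = (((u.2 - r.2 : ℤ) : ℝ) - 1)^2 + ((r.1 - u.1 : ℤ) : ℝ)^2 := by
      have : v.2 = u.2 - 1 := by omega
      have : v.1 = u.1 := by omega
      push_cast [*]; ring
    rw [e1, e2]
    exact ell_core _ _ (by push_neg; intro h h'; omega) (by push_neg; intro h h'; omega)
lemma mem_openSeg (p q x : ℝ × ℝ) (t : ℝ) (h0 : 0 < t) (h1 : t < 1)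
    (hx : x = (1 - t) • p + t • q) : x ∈ openSegment ℝ p q :=
  ⟨1 - t, t, by linarith, h0, by ring, hx.symm⟩

lemma pair_disj {a b c d : ℝ × ℝ} (h1 : a ≠ c) (h2 : a ≠ d) (h3 : b ≠ c) (h4 : b ≠ d) :
    ({a, b} : Set (ℝ × ℝ)) ∩ {c, d} = ∅ := by
  ext x
  simp only [Set.mem_inter_iff, Set.mem_insert_iff, Set.mem_singleton_iff,
    Set.mem_empty_iff_false, iff_false, not_and]
  rintro (rfl | rfl) (rfl | rfl) <;> simp_all

lemma cross {E : ℝ × ℝ → ℝ × ℝ → Prop} (hP : PlaneGraph E) {a b c d x : ℝ × ℝ}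
    (h1 : E a b) (h2 : E c d)
    (ha : x ∈ openSegment ℝ a b) (hb : x ∈ openSegment ℝ c d)
    (hac : a ≠ c) (had : a ≠ d) (hbc : b ≠ c) (hbd : b ≠ d) : False := by
  have h := hP a b c d h1 h2 (pair_disj hac had hbc hbd)
  exact Set.eq_empty_iff_forall_notMem.1 h x ⟨ha, hb⟩

lemma seg_param (b w : ℝ × ℝ) (α β c : ℝ) (h1 : α < c) (h2 : c < β) :
    b + c • w ∈ openSegment ℝ (b + α • w) (b + β • w) := by
  have hβα : 0 < β - α := by linarith
  apply mem_openSeg _ _ _ ((c - α)/(β - α)) (div_pos (by linarith) hβα)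
    (by rw [div_lt_one hβα]; linarith)
  have hne : β - α ≠ 0 := ne_of_gt hβα
  simp only [smul_add, smul_smul]
  rw [show (1 - (c - α) / (β - α)) = (β - c)/(β - α) by field_simp; ring]
  apply Prod.ext <;> simp only [Prod.fst_add, Prod.snd_add, Prod.smul_fst,
    Prod.smul_snd, smul_eq_mul] <;> field_simp <;> ring

lemma ii_add_smul (a w : ℤ × ℤ) (k : ℤ) : ii (a + k • w) = ii a + (k : ℝ) • ii w := by
  unfold ii
  apply Prod.ext <;>
    simp only [Prod.fst_add, Prod.snd_add, Prod.smul_fst, Prod.smul_snd, smul_eq_mul] <;>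
    push_cast <;> ring

lemma ii_inj {a b : ℤ × ℤ} (h : ii a = ii b) : a = b := by
  unfold ii at h
  rw [Prod.mk.injEq] at h
  rw [Prod.ext_iff]
  exact_mod_cast h
set_option maxHeartbeats 2000000 in
lemma hit {E : ℝ × ℝ → ℝ × ℝ → Prop} (hP : PlaneGraph E) {v a g1 g2 : ℤ × ℤ}
    (h1 : E (ii v) (ii a)) (h2 : E (ii g1) (ii g2))
    (t1 t2 : ℝ) (h01 : 0 < t1) (h11 : t1 < 1) (h02 : 0 < t2) (h12 : t2 < 1)
    (heq : (1 - t1) • ii v + t1 • ii a = (1 - t2) • ii g1 + t2 • ii g2)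
    (n1 : v ≠ g1) (n2 : v ≠ g2) (n3 : a ≠ g1) (n4 : a ≠ g2) : False :=
  cross hP h1 h2 (mem_openSeg _ _ _ t1 h01 h11 rfl)
    (mem_openSeg _ _ _ t2 h02 h12 heq)
    (fun h => n1 (ii_inj h)) (fun h => n2 (ii_inj h))
    (fun h => n3 (ii_inj h)) (fun h => n4 (ii_inj h))

set_option maxHeartbeats 2000000 in
lemma far_diag (E : ℝ × ℝ → ℝ × ℝ → Prop) (hP : PlaneGraph E)
    (hgrid : ∀ g d : ℤ × ℤ, d.1 ^ 2 + d.2 ^ 2 = 1 → E (ii g) (ii (g + d)))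
    (v a : ℤ × ℤ) (hE : E (ii v) (ii a))
    (hfar : 3 ≤ max (a.1 - v.1).natAbs (a.2 - v.2).natAbs) :
    a.2 - v.2 = a.1 - v.1 ∨ a.2 - v.2 = -(a.1 - v.1) := by
  by_contra hcon
  push_neg at hcon
  obtain ⟨hc1, hc2⟩ := hcon
  have hsplit : (3 ≤ a.1 - v.1 ∧ -(a.1 - v.1) < a.2 - v.2 ∧ a.2 - v.2 < a.1 - v.1) ∨
      (a.1 - v.1 ≤ -3 ∧ a.1 - v.1 < a.2 - v.2 ∧ a.2 - v.2 < -(a.1 - v.1)) ∨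
      (3 ≤ a.2 - v.2 ∧ -(a.2 - v.2) < a.1 - v.1 ∧ a.1 - v.1 < a.2 - v.2) ∨
      (a.2 - v.2 ≤ -3 ∧ a.2 - v.2 < a.1 - v.1 ∧ a.1 - v.1 < -(a.2 - v.2)) := by omega
  rcases hsplit with ⟨h3, hlo, hhi⟩ | ⟨h3, hlo, hhi⟩ | ⟨h3, hlo, hhi⟩ | ⟨h3, hlo, hhi⟩

  · have hM3 : (3 : ℝ) ≤ ((a.1 : ℝ) - (v.1 : ℝ)) := by
      have h' : ((3 : ℤ) : ℝ) ≤ (((a.1 - v.1) : ℤ) : ℝ) := by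
        exact_mod_cast (show (3 : ℤ) ≤ (a.1 - v.1) by omega)
      push_cast at h'
      linarith
    have hMpos : (0 : ℝ) < ((a.1 : ℝ) - (v.1 : ℝ)) := by linarith
    have hMne : ((a.1 : ℝ) - (v.1 : ℝ)) ≠ 0 := ne_of_gt hMpos
    have ht1a : (0 : ℝ) < 1 / ((a.1 : ℝ) - (v.1 : ℝ)) := by positivity
    have ht1b : 1 / ((a.1 : ℝ) - (v.1 : ℝ)) < 1 := by rw [div_lt_one hMpos]; linarith
    rcases lt_trichotomy (a.2 - v.2) 0 with hn | hn | hn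
    · have hNneg : ((a.2 : ℝ) - (v.2 : ℝ)) < 0 := by
        have h' : (((a.2 - v.2) : ℤ) : ℝ) < ((0 : ℤ) : ℝ) := by exact_mod_cast hn
        push_cast at h'
        linarith
      have hNlt : -((a.1 : ℝ) - (v.1 : ℝ)) < ((a.2 : ℝ) - (v.2 : ℝ)) := by
        have h' : ((-(a.1 - v.1) : ℤ) : ℝ) < (((a.2 - v.2) : ℤ) : ℝ) := by
          exact_mod_cast (show -(a.1 - v.1) < (a.2 - v.2) by omega)
        push_cast at h'
        linarith
      have hz : (0 : ℝ) = 0 := rfl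
      refine hit hP hE (hgrid (v + (1, -1)) (0, 1) (by norm_num)) (1 / ((a.1 : ℝ) - (v.1 : ℝ))) ((((a.1 : ℝ) - (v.1 : ℝ)) + ((a.2 : ℝ) - (v.2 : ℝ))) / ((a.1 : ℝ) - (v.1 : ℝ)))
        ht1a ht1b (by apply div_pos _ hMpos; linarith) (by rw [div_lt_one hMpos]; linarith)
        ?_ ?_ ?_ ?_ ?_
      · unfold ii
        apply Prod.ext <;>
          simp only [Prod.fst_add, Prod.snd_add, Prod.smul_fst, Prod.smul_snd, smul_eq_mul] <;>
          push_cast <;> (try simp only [hz]) <;> field_simp <;> ring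
      · simp only [ne_eq, Prod.ext_iff, Prod.fst_add, Prod.snd_add, not_and]
        intro h'
        omega
      · simp only [ne_eq, Prod.ext_iff, Prod.fst_add, Prod.snd_add, not_and]
        intro h'
        omega
      · simp only [ne_eq, Prod.ext_iff, Prod.fst_add, Prod.snd_add, not_and]
        intro h'
        omega
      · simp only [ne_eq, Prod.ext_iff, Prod.fst_add, Prod.snd_add, not_and]
        intro h'
        omega
    · have hz : (a.2 : ℝ) = (v.2 : ℝ) := by
        exact_mod_cast (show a.2 = v.2 by omega)
      refine hit hP hE (hgrid (v + (1, 0)) (1, 0) (by norm_num)) (3 / (2 * ((a.1 : ℝ) - (v.1 : ℝ)))) ((1 : ℝ) / 2)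
        (by positivity) (by rw [div_lt_one (by linarith)]; linarith) (by norm_num)
        (by norm_num) ?_ ?_ ?_ ?_ ?_
      · unfold ii
        apply Prod.ext <;>
          simp only [Prod.fst_add, Prod.snd_add, Prod.smul_fst, Prod.smul_snd, smul_eq_mul] <;>
          push_cast <;> (try simp only [hz]) <;> field_simp <;> ring
      · simp only [ne_eq, Prod.ext_iff, Prod.fst_add, Prod.snd_add, not_and]
        intro h'
        omega
      · simp only [ne_eq, Prod.ext_iff, Prod.fst_add, Prod.snd_add, not_and]
        intro h'
        omega
      · simp only [ne_eq, Prod.ext_iff, Prod.fst_add, Prod.snd_add, not_and]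
        intro h'
        omega
      · simp only [ne_eq, Prod.ext_iff, Prod.fst_add, Prod.snd_add, not_and]
        intro h'
        omega
    · have hNpos : (0 : ℝ) < ((a.2 : ℝ) - (v.2 : ℝ)) := by
        have h' : ((0 : ℤ) : ℝ) < (((a.2 - v.2) : ℤ) : ℝ) := by exact_mod_cast hn
        push_cast at h'
        linarith
      have hNlt : ((a.2 : ℝ) - (v.2 : ℝ)) < ((a.1 : ℝ) - (v.1 : ℝ)) := by
        have h' : (((a.2 - v.2) : ℤ) : ℝ) < (((a.1 - v.1) : ℤ) : ℝ) := by
          exact_mod_cast (show (a.2 - v.2) < (a.1 - v.1) by omega)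
        push_cast at h'
        linarith
      have hz : (0 : ℝ) = 0 := rfl
      refine hit hP hE (hgrid (v + (1, 0)) (0, 1) (by norm_num)) (1 / ((a.1 : ℝ) - (v.1 : ℝ))) (((a.2 : ℝ) - (v.2 : ℝ)) / ((a.1 : ℝ) - (v.1 : ℝ)))
        ht1a ht1b (div_pos hNpos hMpos) (by rw [div_lt_one hMpos]; linarith) ?_ ?_ ?_ ?_ ?_
      · unfold ii
        apply Prod.ext <;>
          simp only [Prod.fst_add, Prod.snd_add, Prod.smul_fst, Prod.smul_snd, smul_eq_mul] <;>
          push_cast <;> (try simp only [hz]) <;> field_simp <;> ring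
      · simp only [ne_eq, Prod.ext_iff, Prod.fst_add, Prod.snd_add, not_and]
        intro h'
        omega
      · simp only [ne_eq, Prod.ext_iff, Prod.fst_add, Prod.snd_add, not_and]
        intro h'
        omega
      · simp only [ne_eq, Prod.ext_iff, Prod.fst_add, Prod.snd_add, not_and]
        intro h'
        omega
      · simp only [ne_eq, Prod.ext_iff, Prod.fst_add, Prod.snd_add, not_and]
        intro h'
        omega

  · have hM3 : (3 : ℝ) ≤ ((v.1 : ℝ) - (a.1 : ℝ)) := by
      have h' : ((3 : ℤ) : ℝ) ≤ (((v.1 - a.1) : ℤ) : ℝ) := by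
        exact_mod_cast (show (3 : ℤ) ≤ (v.1 - a.1) by omega)
      push_cast at h'
      linarith
    have hMpos : (0 : ℝ) < ((v.1 : ℝ) - (a.1 : ℝ)) := by linarith
    have hMne : ((v.1 : ℝ) - (a.1 : ℝ)) ≠ 0 := ne_of_gt hMpos
    have ht1a : (0 : ℝ) < 1 / ((v.1 : ℝ) - (a.1 : ℝ)) := by positivity
    have ht1b : 1 / ((v.1 : ℝ) - (a.1 : ℝ)) < 1 := by rw [div_lt_one hMpos]; linarith
    rcases lt_trichotomy (a.2 - v.2) 0 with hn | hn | hn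
    · have hNneg : ((a.2 : ℝ) - (v.2 : ℝ)) < 0 := by
        have h' : (((a.2 - v.2) : ℤ) : ℝ) < ((0 : ℤ) : ℝ) := by exact_mod_cast hn
        push_cast at h'
        linarith
      have hNlt : -((v.1 : ℝ) - (a.1 : ℝ)) < ((a.2 : ℝ) - (v.2 : ℝ)) := by
        have h' : ((-(v.1 - a.1) : ℤ) : ℝ) < (((a.2 - v.2) : ℤ) : ℝ) := by
          exact_mod_cast (show -(v.1 - a.1) < (a.2 - v.2) by omega)
        push_cast at h'
        linarith
      have hz : (0 : ℝ) = 0 := rfl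
      refine hit hP hE (hgrid (v + (-1, -1)) (0, 1) (by norm_num)) (1 / ((v.1 : ℝ) - (a.1 : ℝ))) ((((v.1 : ℝ) - (a.1 : ℝ)) + ((a.2 : ℝ) - (v.2 : ℝ))) / ((v.1 : ℝ) - (a.1 : ℝ)))
        ht1a ht1b (by apply div_pos _ hMpos; linarith) (by rw [div_lt_one hMpos]; linarith)
        ?_ ?_ ?_ ?_ ?_
      · unfold ii
        apply Prod.ext <;>
          simp only [Prod.fst_add, Prod.snd_add, Prod.smul_fst, Prod.smul_snd, smul_eq_mul] <;>
          push_cast <;> (try simp only [hz]) <;> field_simp <;> ring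
      · simp only [ne_eq, Prod.ext_iff, Prod.fst_add, Prod.snd_add, not_and]
        intro h'
        omega
      · simp only [ne_eq, Prod.ext_iff, Prod.fst_add, Prod.snd_add, not_and]
        intro h'
        omega
      · simp only [ne_eq, Prod.ext_iff, Prod.fst_add, Prod.snd_add, not_and]
        intro h'
        omega
      · simp only [ne_eq, Prod.ext_iff, Prod.fst_add, Prod.snd_add, not_and]
        intro h'
        omega
    · have hz : (a.2 : ℝ) = (v.2 : ℝ) := by
        exact_mod_cast (show a.2 = v.2 by omega)
      refine hit hP hE (hgrid (v + (-1, 0)) (-1, 0) (by norm_num)) (3 / (2 * ((v.1 : ℝ) - (a.1 : ℝ)))) ((1 : ℝ) / 2)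
        (by positivity) (by rw [div_lt_one (by linarith)]; linarith) (by norm_num)
        (by norm_num) ?_ ?_ ?_ ?_ ?_
      · unfold ii
        apply Prod.ext <;>
          simp only [Prod.fst_add, Prod.snd_add, Prod.smul_fst, Prod.smul_snd, smul_eq_mul] <;>
          push_cast <;> (try simp only [hz]) <;> field_simp <;> ring
      · simp only [ne_eq, Prod.ext_iff, Prod.fst_add, Prod.snd_add, not_and]
        intro h'
        omega
      · simp only [ne_eq, Prod.ext_iff, Prod.fst_add, Prod.snd_add, not_and]
        intro h'
        omega
      · simp only [ne_eq, Prod.ext_iff, Prod.fst_add, Prod.snd_add, not_and]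
        intro h'
        omega
      · simp only [ne_eq, Prod.ext_iff, Prod.fst_add, Prod.snd_add, not_and]
        intro h'
        omega
    · have hNpos : (0 : ℝ) < ((a.2 : ℝ) - (v.2 : ℝ)) := by
        have h' : ((0 : ℤ) : ℝ) < (((a.2 - v.2) : ℤ) : ℝ) := by exact_mod_cast hn
        push_cast at h'
        linarith
      have hNlt : ((a.2 : ℝ) - (v.2 : ℝ)) < ((v.1 : ℝ) - (a.1 : ℝ)) := by
        have h' : (((a.2 - v.2) : ℤ) : ℝ) < (((v.1 - a.1) : ℤ) : ℝ) := by
          exact_mod_cast (show (a.2 - v.2) < (v.1 - a.1) by omega)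
        push_cast at h'
        linarith
      have hz : (0 : ℝ) = 0 := rfl
      refine hit hP hE (hgrid (v + (-1, 0)) (0, 1) (by norm_num)) (1 / ((v.1 : ℝ) - (a.1 : ℝ))) (((a.2 : ℝ) - (v.2 : ℝ)) / ((v.1 : ℝ) - (a.1 : ℝ)))
        ht1a ht1b (div_pos hNpos hMpos) (by rw [div_lt_one hMpos]; linarith) ?_ ?_ ?_ ?_ ?_
      · unfold ii
        apply Prod.ext <;>
          simp only [Prod.fst_add, Prod.snd_add, Prod.smul_fst, Prod.smul_snd, smul_eq_mul] <;>
          push_cast <;> (try simp only [hz]) <;> field_simp <;> ring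
      · simp only [ne_eq, Prod.ext_iff, Prod.fst_add, Prod.snd_add, not_and]
        intro h'
        omega
      · simp only [ne_eq, Prod.ext_iff, Prod.fst_add, Prod.snd_add, not_and]
        intro h'
        omega
      · simp only [ne_eq, Prod.ext_iff, Prod.fst_add, Prod.snd_add, not_and]
        intro h'
        omega
      · simp only [ne_eq, Prod.ext_iff, Prod.fst_add, Prod.snd_add, not_and]
        intro h'
        omega

  · have hM3 : (3 : ℝ) ≤ ((a.2 : ℝ) - (v.2 : ℝ)) := by
      have h' : ((3 : ℤ) : ℝ) ≤ (((a.2 - v.2) : ℤ) : ℝ) := by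
        exact_mod_cast (show (3 : ℤ) ≤ (a.2 - v.2) by omega)
      push_cast at h'
      linarith
    have hMpos : (0 : ℝ) < ((a.2 : ℝ) - (v.2 : ℝ)) := by linarith
    have hMne : ((a.2 : ℝ) - (v.2 : ℝ)) ≠ 0 := ne_of_gt hMpos
    have ht1a : (0 : ℝ) < 1 / ((a.2 : ℝ) - (v.2 : ℝ)) := by positivity
    have ht1b : 1 / ((a.2 : ℝ) - (v.2 : ℝ)) < 1 := by rw [div_lt_one hMpos]; linarith
    rcases lt_trichotomy (a.1 - v.1) 0 with hn | hn | hn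
    · have hNneg : ((a.1 : ℝ) - (v.1 : ℝ)) < 0 := by
        have h' : (((a.1 - v.1) : ℤ) : ℝ) < ((0 : ℤ) : ℝ) := by exact_mod_cast hn
        push_cast at h'
        linarith
      have hNlt : -((a.2 : ℝ) - (v.2 : ℝ)) < ((a.1 : ℝ) - (v.1 : ℝ)) := by
        have h' : ((-(a.2 - v.2) : ℤ) : ℝ) < (((a.1 - v.1) : ℤ) : ℝ) := by
          exact_mod_cast (show -(a.2 - v.2) < (a.1 - v.1) by omega)
        push_cast at h'
        linarith
      have hz : (0 : ℝ) = 0 := rfl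
      refine hit hP hE (hgrid (v + (-1, 1)) (1, 0) (by norm_num)) (1 / ((a.2 : ℝ) - (v.2 : ℝ))) ((((a.2 : ℝ) - (v.2 : ℝ)) + ((a.1 : ℝ) - (v.1 : ℝ))) / ((a.2 : ℝ) - (v.2 : ℝ)))
        ht1a ht1b (by apply div_pos _ hMpos; linarith) (by rw [div_lt_one hMpos]; linarith)
        ?_ ?_ ?_ ?_ ?_
      · unfold ii
        apply Prod.ext <;>
          simp only [Prod.fst_add, Prod.snd_add, Prod.smul_fst, Prod.smul_snd, smul_eq_mul] <;>
          push_cast <;> (try simp only [hz]) <;> field_simp <;> ring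
      · simp only [ne_eq, Prod.ext_iff, Prod.fst_add, Prod.snd_add, not_and]
        intro h'
        omega
      · simp only [ne_eq, Prod.ext_iff, Prod.fst_add, Prod.snd_add, not_and]
        intro h'
        omega
      · simp only [ne_eq, Prod.ext_iff, Prod.fst_add, Prod.snd_add, not_and]
        intro h'
        omega
      · simp only [ne_eq, Prod.ext_iff, Prod.fst_add, Prod.snd_add, not_and]
        intro h'
        omega
    · have hz : (a.1 : ℝ) = (v.1 : ℝ) := by
        exact_mod_cast (show a.1 = v.1 by omega)
      refine hit hP hE (hgrid (v + (0, 1)) (0, 1) (by norm_num)) (3 / (2 * ((a.2 : ℝ) - (v.2 : ℝ)))) ((1 : ℝ) / 2)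
        (by positivity) (by rw [div_lt_one (by linarith)]; linarith) (by norm_num)
        (by norm_num) ?_ ?_ ?_ ?_ ?_
      · unfold ii
        apply Prod.ext <;>
          simp only [Prod.fst_add, Prod.snd_add, Prod.smul_fst, Prod.smul_snd, smul_eq_mul] <;>
          push_cast <;> (try simp only [hz]) <;> field_simp <;> ring
      · simp only [ne_eq, Prod.ext_iff, Prod.fst_add, Prod.snd_add, not_and]
        intro h'
        omega
      · simp only [ne_eq, Prod.ext_iff, Prod.fst_add, Prod.snd_add, not_and]
        intro h'
        omega
      · simp only [ne_eq, Prod.ext_iff, Prod.fst_add, Prod.snd_add, not_and]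
        intro h'
        omega
      · simp only [ne_eq, Prod.ext_iff, Prod.fst_add, Prod.snd_add, not_and]
        intro h'
        omega
    · have hNpos : (0 : ℝ) < ((a.1 : ℝ) - (v.1 : ℝ)) := by
        have h' : ((0 : ℤ) : ℝ) < (((a.1 - v.1) : ℤ) : ℝ) := by exact_mod_cast hn
        push_cast at h'
        linarith
      have hNlt : ((a.1 : ℝ) - (v.1 : ℝ)) < ((a.2 : ℝ) - (v.2 : ℝ)) := by
        have h' : (((a.1 - v.1) : ℤ) : ℝ) < (((a.2 - v.2) : ℤ) : ℝ) := by
          exact_mod_cast (show (a.1 - v.1) < (a.2 - v.2) by omega)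
        push_cast at h'
        linarith
      have hz : (0 : ℝ) = 0 := rfl
      refine hit hP hE (hgrid (v + (0, 1)) (1, 0) (by norm_num)) (1 / ((a.2 : ℝ) - (v.2 : ℝ))) (((a.1 : ℝ) - (v.1 : ℝ)) / ((a.2 : ℝ) - (v.2 : ℝ)))
        ht1a ht1b (div_pos hNpos hMpos) (by rw [div_lt_one hMpos]; linarith) ?_ ?_ ?_ ?_ ?_
      · unfold ii
        apply Prod.ext <;>
          simp only [Prod.fst_add, Prod.snd_add, Prod.smul_fst, Prod.smul_snd, smul_eq_mul] <;>
          push_cast <;> (try simp only [hz]) <;> field_simp <;> ring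
      · simp only [ne_eq, Prod.ext_iff, Prod.fst_add, Prod.snd_add, not_and]
        intro h'
        omega
      · simp only [ne_eq, Prod.ext_iff, Prod.fst_add, Prod.snd_add, not_and]
        intro h'
        omega
      · simp only [ne_eq, Prod.ext_iff, Prod.fst_add, Prod.snd_add, not_and]
        intro h'
        omega
      · simp only [ne_eq, Prod.ext_iff, Prod.fst_add, Prod.snd_add, not_and]
        intro h'
        omega

  · have hM3 : (3 : ℝ) ≤ ((v.2 : ℝ) - (a.2 : ℝ)) := by
      have h' : ((3 : ℤ) : ℝ) ≤ (((v.2 - a.2) : ℤ) : ℝ) := by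
        exact_mod_cast (show (3 : ℤ) ≤ (v.2 - a.2) by omega)
      push_cast at h'
      linarith
    have hMpos : (0 : ℝ) < ((v.2 : ℝ) - (a.2 : ℝ)) := by linarith
    have hMne : ((v.2 : ℝ) - (a.2 : ℝ)) ≠ 0 := ne_of_gt hMpos
    have ht1a : (0 : ℝ) < 1 / ((v.2 : ℝ) - (a.2 : ℝ)) := by positivity
    have ht1b : 1 / ((v.2 : ℝ) - (a.2 : ℝ)) < 1 := by rw [div_lt_one hMpos]; linarith
    rcases lt_trichotomy (a.1 - v.1) 0 with hn | hn | hn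
    · have hNneg : ((a.1 : ℝ) - (v.1 : ℝ)) < 0 := by
        have h' : (((a.1 - v.1) : ℤ) : ℝ) < ((0 : ℤ) : ℝ) := by exact_mod_cast hn
        push_cast at h'
        linarith
      have hNlt : -((v.2 : ℝ) - (a.2 : ℝ)) < ((a.1 : ℝ) - (v.1 : ℝ)) := by
        have h' : ((-(v.2 - a.2) : ℤ) : ℝ) < (((a.1 - v.1) : ℤ) : ℝ) := by
          exact_mod_cast (show -(v.2 - a.2) < (a.1 - v.1) by omega)
        push_cast at h'
        linarith
      have hz : (0 : ℝ) = 0 := rfl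
      refine hit hP hE (hgrid (v + (-1, -1)) (1, 0) (by norm_num)) (1 / ((v.2 : ℝ) - (a.2 : ℝ))) ((((v.2 : ℝ) - (a.2 : ℝ)) + ((a.1 : ℝ) - (v.1 : ℝ))) / ((v.2 : ℝ) - (a.2 : ℝ)))
        ht1a ht1b (by apply div_pos _ hMpos; linarith) (by rw [div_lt_one hMpos]; linarith)
        ?_ ?_ ?_ ?_ ?_
      · unfold ii
        apply Prod.ext <;>
          simp only [Prod.fst_add, Prod.snd_add, Prod.smul_fst, Prod.smul_snd, smul_eq_mul] <;>
          push_cast <;> (try simp only [hz]) <;> field_simp <;> ring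
      · simp only [ne_eq, Prod.ext_iff, Prod.fst_add, Prod.snd_add, not_and]
        intro h'
        omega
      · simp only [ne_eq, Prod.ext_iff, Prod.fst_add, Prod.snd_add, not_and]
        intro h'
        omega
      · simp only [ne_eq, Prod.ext_iff, Prod.fst_add, Prod.snd_add, not_and]
        intro h'
        omega
      · simp only [ne_eq, Prod.ext_iff, Prod.fst_add, Prod.snd_add, not_and]
        intro h'
        omega
    · have hz : (a.1 : ℝ) = (v.1 : ℝ) := by
        exact_mod_cast (show a.1 = v.1 by omega)
      refine hit hP hE (hgrid (v + (0, -1)) (0, -1) (by norm_num)) (3 / (2 * ((v.2 : ℝ) - (a.2 : ℝ)))) ((1 : ℝ) / 2)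
        (by positivity) (by rw [div_lt_one (by linarith)]; linarith) (by norm_num)
        (by norm_num) ?_ ?_ ?_ ?_ ?_
      · unfold ii
        apply Prod.ext <;>
          simp only [Prod.fst_add, Prod.snd_add, Prod.smul_fst, Prod.smul_snd, smul_eq_mul] <;>
          push_cast <;> (try simp only [hz]) <;> field_simp <;> ring
      · simp only [ne_eq, Prod.ext_iff, Prod.fst_add, Prod.snd_add, not_and]
        intro h'
        omega
      · simp only [ne_eq, Prod.ext_iff, Prod.fst_add, Prod.snd_add, not_and]
        intro h'
        omega
      · simp only [ne_eq, Prod.ext_iff, Prod.fst_add, Prod.snd_add, not_and]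
        intro h'
        omega
      · simp only [ne_eq, Prod.ext_iff, Prod.fst_add, Prod.snd_add, not_and]
        intro h'
        omega
    · have hNpos : (0 : ℝ) < ((a.1 : ℝ) - (v.1 : ℝ)) := by
        have h' : ((0 : ℤ) : ℝ) < (((a.1 - v.1) : ℤ) : ℝ) := by exact_mod_cast hn
        push_cast at h'
        linarith
      have hNlt : ((a.1 : ℝ) - (v.1 : ℝ)) < ((v.2 : ℝ) - (a.2 : ℝ)) := by
        have h' : (((a.1 - v.1) : ℤ) : ℝ) < (((v.2 - a.2) : ℤ) : ℝ) := by
          exact_mod_cast (show (a.1 - v.1) < (v.2 - a.2) by omega)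
        push_cast at h'
        linarith
      have hz : (0 : ℝ) = 0 := rfl
      refine hit hP hE (hgrid (v + (0, -1)) (1, 0) (by norm_num)) (1 / ((v.2 : ℝ) - (a.2 : ℝ))) (((a.1 : ℝ) - (v.1 : ℝ)) / ((v.2 : ℝ) - (a.2 : ℝ)))
        ht1a ht1b (div_pos hNpos hMpos) (by rw [div_lt_one hMpos]; linarith) ?_ ?_ ?_ ?_ ?_
      · unfold ii
        apply Prod.ext <;>
          simp only [Prod.fst_add, Prod.snd_add, Prod.smul_fst, Prod.smul_snd, smul_eq_mul] <;>
          push_cast <;> (try simp only [hz]) <;> field_simp <;> ring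
      · simp only [ne_eq, Prod.ext_iff, Prod.fst_add, Prod.snd_add, not_and]
        intro h'
        omega
      · simp only [ne_eq, Prod.ext_iff, Prod.fst_add, Prod.snd_add, not_and]
        intro h'
        omega
      · simp only [ne_eq, Prod.ext_iff, Prod.fst_add, Prod.snd_add, not_and]
        intro h'
        omega
      · simp only [ne_eq, Prod.ext_iff, Prod.fst_add, Prod.snd_add, not_and]
        intro h'
        omega
lemma ii_ne {a b : ℤ × ℤ} (h : a ≠ b) : ii a ≠ ii b := fun he => h (ii_inj he)

lemma deg_infinite (E : ℝ × ℝ → ℝ × ℝ → Prop)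
    (hdeg : ∀ p, {q | E p q}.ncard ≤ 3)
    (hgrid : ∀ g d : ℤ × ℤ, d.1 ^ 2 + d.2 ^ 2 = 1 → E (ii g) (ii (g + d)))
    (v : ℤ × ℤ) : {q | E (ii v) q}.Infinite := by
  by_contra hfin
  rw [Set.not_infinite] at hfin
  have h1 : ii (v + (1, 0)) ∈ {q | E (ii v) q} := hgrid v (1, 0) (by norm_num)
  have h2 : ii (v + (-1, 0)) ∈ {q | E (ii v) q} := hgrid v (-1, 0) (by norm_num)
  have h3 : ii (v + (0, 1)) ∈ {q | E (ii v) q} := hgrid v (0, 1) (by norm_num)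
  have h4 : ii (v + (0, -1)) ∈ {q | E (ii v) q} := hgrid v (0, -1) (by norm_num)
  have hsub : ({ii (v + (1, 0)), ii (v + (-1, 0)), ii (v + (0, 1)), ii (v + (0, -1))} :
      Set (ℝ × ℝ)) ⊆ {q | E (ii v) q} := by
    intro x hx
    rcases hx with rfl | rfl | rfl | rfl
    exacts [h1, h2, h3, h4]
  have hne : ∀ d1 d2 : ℤ × ℤ, d1 ≠ d2 → ii (v + d1) ≠ ii (v + d2) := by
    intro d1 d2 hd
    apply ii_ne
    intro h
    apply hd
    have h1 := congrArg Prod.fst h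
    have h2 := congrArg Prod.snd h
    simp only [Prod.fst_add, Prod.snd_add] at h1 h2
    rw [Prod.ext_iff]
    omega
  have hc4 : ({ii (v + (1, 0)), ii (v + (-1, 0)), ii (v + (0, 1)), ii (v + (0, -1))} :
      Set (ℝ × ℝ)).ncard = 4 := by
    rw [Set.ncard_insert_of_notMem, Set.ncard_insert_of_notMem,
        Set.ncard_insert_of_notMem, Set.ncard_singleton]
    · simp only [Set.mem_singleton_iff]
      exact hne _ _ (by simp [Prod.ext_iff])
    · simp only [Set.mem_insert_iff, Set.mem_singleton_iff]
      push_neg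
      exact ⟨hne _ _ (by simp [Prod.ext_iff]), hne _ _ (by simp [Prod.ext_iff])⟩
    · simp only [Set.mem_insert_iff, Set.mem_singleton_iff]
      push_neg
      exact ⟨hne _ _ (by simp [Prod.ext_iff]), hne _ _ (by simp [Prod.ext_iff]),
        hne _ _ (by simp [Prod.ext_iff])⟩
  have := Set.ncard_le_ncard hsub hfin
  have := hdeg (ii v)
  omega

lemma exists_ray (E : ℝ × ℝ → ℝ × ℝ → Prop)
    (hV : ∀ p q, E p q → p ∈ sqLattice ∧ q ∈ sqLattice)
    (hP : PlaneGraph E)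
    (hgrid : ∀ g d : ℤ × ℤ, d.1 ^ 2 + d.2 ^ 2 = 1 → E (ii g) (ii (g + d)))
    (hdeg : ∀ p, {q | E p q}.ncard ≤ 3) (v : ℤ × ℤ) :
    ∃ w : ℤ × ℤ, (w = (1, 1) ∨ w = (1, -1) ∨ w = (-1, 1) ∨ w = (-1, -1)) ∧
      ∀ K : ℤ, ∃ j : ℤ, K ≤ j ∧ 1 ≤ j ∧ E (ii v) (ii (v + j • w)) := by
  by_contra hno
  push_neg at hno
  have key : ∀ w : ℤ × ℤ, (w = (1, 1) ∨ w = (1, -1) ∨ w = (-1, 1) ∨ w = (-1, -1)) →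
      ∃ K : ℤ, 1 ≤ K ∧ ∀ j : ℤ, K ≤ j → ¬E (ii v) (ii (v + j • w)) := by
    intro w hw
    obtain ⟨K, hK⟩ := hno w hw
    refine ⟨max K 1, le_max_right _ _, fun j hj hE => ?_⟩
    exact (hK j (le_trans (le_max_left _ _) hj) (le_trans (le_max_right _ _) hj)) hE
  obtain ⟨K1, hK1p, hK1⟩ := key (1, 1) (by tauto)
  obtain ⟨K2, hK2p, hK2⟩ := key (1, -1) (by tauto)
  obtain ⟨K3, hK3p, hK3⟩ := key (-1, 1) (by tauto)
  obtain ⟨K4, hK4p, hK4⟩ := key (-1, -1) (by tauto)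
  set C : ℤ := K1 + K2 + K3 + K4 + 3 with hC
  have hCbig : K1 ≤ C ∧ K2 ≤ C ∧ K3 ≤ C ∧ K4 ≤ C ∧ 3 ≤ C := by omega
  -- every neighbour lies in the box of radius C
  have hbox : {q | E (ii v) q} ⊆ ii '' (Set.Icc (v.1 - C, v.2 - C) (v.1 + C, v.2 + C)) := by
    intro q hq
    obtain ⟨m, n, rfl⟩ := (hV _ _ hq).2
    have hqa : ((m : ℝ), (n : ℝ)) = ii (m, n) := rfl
    rw [hqa] at hq ⊢
    refine ⟨(m, n), ?_, rfl⟩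
    simp only [Set.mem_Icc, Prod.le_def]
    by_cases hclose : 3 ≤ max ((m, n).1 - v.1).natAbs (((m, n).2 - v.2)).natAbs
    · have hd := far_diag E hP hgrid v (m, n) hq hclose
      -- diagonal : (m,n) = v + j • w for suitable direction
      rcases hd with hd | hd
      · rcases lt_trichotomy (m - v.1) 0 with hs | hs | hs
        · -- direction (-1,-1), j = v.1 - m ≥ 1
          have hrw : (m, n) = v + (v.1 - m) • ((-1, -1) : ℤ × ℤ) := by
            rw [Prod.ext_iff]
            constructor <;>
              simp only [Prod.fst_add, Prod.snd_add, Prod.smul_fst, Prod.smul_snd,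
                smul_eq_mul] <;> omega
          have hj : v.1 - m < K4 := by
            by_contra hge
            push_neg at hge
            exact hK4 _ hge (hrw ▸ hq)
          simp only [Prod.fst, Prod.snd] at *
          omega
        · simp only [Prod.fst, Prod.snd] at *
          omega
        · have hrw : (m, n) = v + (m - v.1) • ((1, 1) : ℤ × ℤ) := by
            rw [Prod.ext_iff]
            constructor <;>
              simp only [Prod.fst_add, Prod.snd_add, Prod.smul_fst, Prod.smul_snd,
                smul_eq_mul] <;> omega
          have hj : m - v.1 < K1 := by
            by_contra hge
            push_neg at hge
            exact hK1 _ hge (hrw ▸ hq)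
          simp only [Prod.fst, Prod.snd] at *
          omega
      · rcases lt_trichotomy (m - v.1) 0 with hs | hs | hs
        · have hrw : (m, n) = v + (v.1 - m) • ((-1, 1) : ℤ × ℤ) := by
            rw [Prod.ext_iff]
            constructor <;>
              simp only [Prod.fst_add, Prod.snd_add, Prod.smul_fst, Prod.smul_snd,
                smul_eq_mul] <;> omega
          have hj : v.1 - m < K3 := by
            by_contra hge
            push_neg at hge
            exact hK3 _ hge (hrw ▸ hq)
          simp only [Prod.fst, Prod.snd] at *
          omega
        · simp only [Prod.fst, Prod.snd] at *
          omega
        · have hrw : (m, n) = v + (m - v.1) • ((1, -1) : ℤ × ℤ) := by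
            rw [Prod.ext_iff]
            constructor <;>
              simp only [Prod.fst_add, Prod.snd_add, Prod.smul_fst, Prod.smul_snd,
                smul_eq_mul] <;> omega
          have hj : m - v.1 < K2 := by
            by_contra hge
            push_neg at hge
            exact hK2 _ hge (hrw ▸ hq)
          simp only [Prod.fst, Prod.snd] at *
          omega
    · push_neg at hclose
      simp only [Prod.fst, Prod.snd] at *
      omega
  have hfin : ({q | E (ii v) q}).Finite :=
    Set.Finite.subset ((Set.finite_Icc _ _).image ii) hbox
  exact (deg_infinite E hdeg hgrid v) hfin
lemma ray_clash (E : ℝ × ℝ → ℝ × ℝ → Prop) (hP : PlaneGraph E) (w : ℤ × ℤ)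
    (hw : w = (1, 1) ∨ w = (1, -1) ∨ w = (-1, 1) ∨ w = (-1, -1))
    (p q : ℤ × ℤ) (δ : ℤ) (hδ : δ ≠ 0) (hpq : p = q + δ • w)
    (hp : ∀ K : ℤ, ∃ j : ℤ, K ≤ j ∧ 1 ≤ j ∧ E (ii p) (ii (p + j • w)))
    (hq : ∀ K : ℤ, ∃ j : ℤ, K ≤ j ∧ 1 ≤ j ∧ E (ii q) (ii (q + j • w))) : False := by
  obtain ⟨j, hjK, hj1, hEp⟩ := hp (|δ| + 2)
  obtain ⟨j', hj'K, hj'1, hEq⟩ := hq (|δ| + j + 2)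
  set W : ℝ × ℝ := ii w with hW
  have hW1 : W.1 = 1 ∨ W.1 = -1 := by
    rcases hw with rfl | rfl | rfl | rfl <;> simp [hW, ii]
  have hWne : ∀ (b : ℝ × ℝ) (α β : ℝ), α ≠ β → b + α • W ≠ b + β • W := by
    intro b α β hab h
    have h1 := congrArg Prod.fst h
    simp only [Prod.fst_add, Prod.smul_fst, smul_eq_mul] at h1
    rcases hW1 with hw1 | hw1 <;> rw [hw1] at h1 <;> apply hab <;> linarith
  -- edge of q : parameters 0 and j' ; edge of p : parameters δ and δ + j
  have hEq' : E (ii q + (0 : ℝ) • W) (ii q + (j' : ℝ) • W) := by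
    have e0 : ii q + (0 : ℝ) • W = ii q := by simp
    rw [e0, ← ii_add_smul]
    exact hEq
  have hEp' : E (ii q + (δ : ℝ) • W) (ii q + ((δ + j : ℤ) : ℝ) • W) := by
    have e1 : ii q + (δ : ℝ) • W = ii p := by rw [hpq, ii_add_smul]
    have e2 : ii q + ((δ + j : ℤ) : ℝ) • W = ii (p + j • w) := by
      rw [hpq, add_assoc, ← add_smul, ii_add_smul]
    rw [e1, e2]
    exact hEp
  -- overlap of the open parameter intervals
  set L : ℤ := max 0 δ with hL
  set U : ℤ := min j' (δ + j) with hU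
  have hLU : L < U := by
    rcases abs_cases δ with ⟨he, _⟩ | ⟨he, _⟩ <;> omega
  set c : ℝ := ((L : ℝ) + (U : ℝ)) / 2 with hc
  have hLc : (L : ℝ) < c := by
    have : (L : ℝ) < (U : ℝ) := by exact_mod_cast hLU
    rw [hc]; linarith
  have hcU : c < (U : ℝ) := by
    have : (L : ℝ) < (U : ℝ) := by exact_mod_cast hLU
    rw [hc]; linarith
  have hcast : ∀ x y : ℤ, x ≤ y → (x : ℝ) ≤ (y : ℝ) := fun x y h => by exact_mod_cast h
  have m1 : ii q + c • W ∈ openSegment ℝ (ii q + (0 : ℝ) • W) (ii q + (j' : ℝ) • W) := by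
    apply seg_param
    · have : (0 : ℤ) ≤ L := le_max_left _ _
      have := hcast _ _ this
      simp only [Int.cast_zero] at this
      linarith
    · have : U ≤ j' := min_le_left _ _
      have := hcast _ _ this
      linarith
  have m2 : ii q + c • W ∈ openSegment ℝ (ii q + (δ : ℝ) • W) (ii q + ((δ + j : ℤ) : ℝ) • W) := by
    apply seg_param
    · have : δ ≤ L := le_max_right _ _
      have := hcast _ _ this
      linarith
    · have : U ≤ δ + j := min_le_right _ _
      have := hcast _ _ this
      linarith
  have hne1 : (0 : ℝ) ≠ (δ : ℝ) := by
    intro h; apply hδ; exact_mod_cast h.symm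
  have hne2 : (0 : ℝ) ≠ ((δ + j : ℤ) : ℝ) := by
    intro h
    have : (0 : ℤ) = δ + j := by exact_mod_cast h
    rcases abs_cases δ with ⟨he, _⟩ | ⟨he, _⟩ <;> omega
  have hne3 : (j' : ℝ) ≠ (δ : ℝ) := by
    intro h
    have : j' = δ := by exact_mod_cast h
    rcases abs_cases δ with ⟨he, _⟩ | ⟨he, _⟩ <;> omega
  have hne4 : (j' : ℝ) ≠ ((δ + j : ℤ) : ℝ) := by
    intro h
    have : j' = δ + j := by exact_mod_cast h
    rcases abs_cases δ with ⟨he, _⟩ | ⟨he, _⟩ <;> omega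
  exact cross hP hEq' hEp' m1 m2 (hWne _ _ _ hne1) (hWne _ _ _ hne2)
    (hWne _ _ _ hne3) (hWne _ _ _ hne4)
lemma pair_clash (E : ℝ × ℝ → ℝ × ℝ → Prop) (hP : PlaneGraph E) (w0 : ℤ × ℤ)
    (hw : w0 = (1, 1) ∨ w0 = (1, -1) ∨ w0 = (-1, 1) ∨ w0 = (-1, -1))
    (x z : ℤ × ℤ) (hxz : x ≠ z) (δ : ℤ) (hδeq : x = z + δ • w0)
    (hx : ∀ K : ℤ, ∃ j : ℤ, K ≤ j ∧ 1 ≤ j ∧ E (ii x) (ii (x + j • w0)))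
    (hz : ∀ K : ℤ, ∃ j : ℤ, K ≤ j ∧ 1 ≤ j ∧ E (ii z) (ii (z + j • w0))) : False := by
  have hδ0 : δ ≠ 0 := by
    rintro rfl
    simp only [zero_smul, add_zero] at hδeq
    exact hxz hδeq
  exact ray_clash E hP w0 hw x z δ hδ0 hδeq hx hz

lemma exists_missing_unit (E : ℝ × ℝ → ℝ × ℝ → Prop)
    (hV : ∀ p q, E p q → p ∈ sqLattice ∧ q ∈ sqLattice)
    (hP : PlaneGraph E)
    (hdeg : ∀ p, {q | E p q}.ncard ≤ 3) :
    ∃ u v : ℤ × ℤ, (v.1 - u.1) ^ 2 + (v.2 - u.2) ^ 2 = 1 ∧ ¬ E (ii u) (ii v) := by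
  classical
  by_contra h
  push_neg at h
  have hgrid : ∀ g d : ℤ × ℤ, d.1 ^ 2 + d.2 ^ 2 = 1 → E (ii g) (ii (g + d)) := by
    intro g d hd
    apply h g (g + d)
    simp only [Prod.fst_add, Prod.snd_add]
    rw [show g.1 + d.1 - g.1 = d.1 from by ring, show g.2 + d.2 - g.2 = d.2 from by ring]
    exact hd
  have hray := fun v => exists_ray E hV hP hgrid hdeg v
  choose w hw4 hwray using hray
  set f : ℤ × ℤ → Bool × ℤ := fun v =>
    if w v = (1, 1) ∨ w v = (-1, -1) then (false, v.2 - v.1) else (true, v.2 + v.1) with hf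
  set S : Finset (ℤ × ℤ) := Finset.Icc (0 : ℤ) 7 ×ˢ Finset.Icc (0 : ℤ) 7 with hS
  set T : Finset (Bool × ℤ) :=
    ({false} ×ˢ Finset.Icc (-7 : ℤ) 7) ∪ ({true} ×ˢ Finset.Icc (0 : ℤ) 14) with hT
  have hmaps : ∀ v ∈ S, f v ∈ T := by
    intro v hv
    rw [hS, Finset.mem_product, Finset.mem_Icc, Finset.mem_Icc] at hv
    by_cases hcnd : w v = (1, 1) ∨ w v = (-1, -1)
    · rw [hf]
      simp only [if_pos hcnd, hT, Finset.mem_union, Finset.mem_product,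
        Finset.mem_singleton, Finset.mem_Icc]
      left
      exact ⟨trivial, by omega, by omega⟩
    · rw [hf]
      simp only [if_neg hcnd, hT, Finset.mem_union, Finset.mem_product,
        Finset.mem_singleton, Finset.mem_Icc]
      right
      exact ⟨trivial, by omega, by omega⟩
  have hcard : T.card * 2 < S.card := by
    have h1 : S.card = 64 := by
      rw [hS, Finset.card_product, Int.card_Icc]; decide
    have h2 : ({false} ×ˢ Finset.Icc (-7 : ℤ) 7).card = 15 := by
      rw [Finset.card_product, Finset.card_singleton, Int.card_Icc]; decide
    have h3 : ({true} ×ˢ Finset.Icc (0 : ℤ) 14).card = 15 := by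
      rw [Finset.card_product, Finset.card_singleton, Int.card_Icc]; decide
    have h4 : T.card ≤ 30 := by
      rw [hT]
      refine le_trans (Finset.card_union_le _ _) ?_
      omega
    omega
  obtain ⟨y, hy, hfib⟩ := Finset.exists_lt_card_fiber_of_mul_lt_card_of_maps_to hmaps hcard
  rw [Finset.two_lt_card_iff] at hfib
  obtain ⟨p, q, r, hpm, hqm, hrm, hpq, hpr, hqr⟩ := hfib
  rw [Finset.mem_filter] at hpm hqm hrm
  have decode : ∀ x : ℤ × ℤ, f x = y →
      (y.1 = false ∧ (w x = (1, 1) ∨ w x = (-1, -1)) ∧ x.2 - x.1 = y.2) ∨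
      (y.1 = true ∧ (w x = (1, -1) ∨ w x = (-1, 1)) ∧ x.2 + x.1 = y.2) := by
    intro x hx
    by_cases hcnd : w x = (1, 1) ∨ w x = (-1, -1)
    · left
      rw [hf] at hx
      simp only [if_pos hcnd] at hx
      rw [Prod.ext_iff] at hx
      exact ⟨hx.1.symm, hcnd, hx.2⟩
    · right
      rw [hf] at hx
      simp only [if_neg hcnd] at hx
      rw [Prod.ext_iff] at hx
      have h4 := hw4 x
      refine ⟨hx.1.symm, ?_, hx.2⟩
      rcases h4 with h' | h' | h' | h' <;> tauto
    
  have dp := decode p hpm.2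
  have dq := decode q hqm.2
  have dr := decode r hrm.2
  rcases dp with ⟨hyb, hwp, hlp⟩ | ⟨hyb, hwp, hlp⟩
  · -- family of lines y = x + c
    rcases dq with ⟨_, hwq, hlq⟩ | ⟨hyb', _, _⟩; swap
    · rw [hyb] at hyb'; exact absurd hyb'.symm (by simp)
    rcases dr with ⟨_, hwr, hlr⟩ | ⟨hyb', _, _⟩; swap
    · rw [hyb] at hyb'; exact absurd hyb'.symm (by simp)
    have hclash : ∀ x z : ℤ × ℤ, x ≠ z → x.2 - x.1 = z.2 - z.1 →
        (w x = (1, 1) ∨ w x = (-1, -1)) → w x = w z → False := by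
      intro x z hxz hline hwx hwxz
      rcases hwx with hd | hd
      · have hwz : w z = (1, 1) := by rw [← hwxz]; exact hd
        have hx' := hwray x
        rw [hd] at hx'
        have hz' := hwray z
        rw [hwz] at hz'
        refine pair_clash E hP (1, 1) (Or.inl rfl) x z hxz (x.1 - z.1) ?_ hx' hz'
        rw [Prod.ext_iff]
        constructor <;>
          simp only [Prod.fst_add, Prod.snd_add, Prod.smul_fst, Prod.smul_snd,
            smul_eq_mul] <;> omega
      · have hwz : w z = (-1, -1) := by rw [← hwxz]; exact hd
        have hx' := hwray x
        rw [hd] at hx'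
        have hz' := hwray z
        rw [hwz] at hz'
        refine pair_clash E hP (-1, -1) (Or.inr (Or.inr (Or.inr rfl))) x z hxz (z.1 - x.1) ?_ hx' hz'
        rw [Prod.ext_iff]
        constructor <;>
          simp only [Prod.fst_add, Prod.snd_add, Prod.smul_fst, Prod.smul_snd,
            smul_eq_mul] <;> omega
    have htwo : w p = w q ∨ w p = w r ∨ w q = w r := by
      rcases hwp with h1 | h1 <;> rcases hwq with h2 | h2 <;> rcases hwr with h3 | h3 <;>
        simp [h1, h2, h3]
    rcases htwo with he | he | he
    · exact hclash p q hpq (by omega) hwp he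
    · exact hclash p r hpr (by omega) hwp he
    · exact hclash q r hqr (by omega) hwq he
  · -- family of lines y = -x + c
    rcases dq with ⟨hyb', _, _⟩ | ⟨_, hwq, hlq⟩
    · rw [hyb] at hyb'; exact absurd hyb'.symm (by simp)
    rcases dr with ⟨hyb', _, _⟩ | ⟨_, hwr, hlr⟩
    · rw [hyb] at hyb'; exact absurd hyb'.symm (by simp)
    have hclash : ∀ x z : ℤ × ℤ, x ≠ z → x.2 + x.1 = z.2 + z.1 →
        (w x = (1, -1) ∨ w x = (-1, 1)) → w x = w z → False := by
      intro x z hxz hline hwx hwxz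
      rcases hwx with hd | hd
      · have hwz : w z = (1, -1) := by rw [← hwxz]; exact hd
        have hx' := hwray x
        rw [hd] at hx'
        have hz' := hwray z
        rw [hwz] at hz'
        refine pair_clash E hP (1, -1) (Or.inr (Or.inl rfl)) x z hxz (x.1 - z.1) ?_ hx' hz'
        rw [Prod.ext_iff]
        constructor <;>
          simp only [Prod.fst_add, Prod.snd_add, Prod.smul_fst, Prod.smul_snd,
            smul_eq_mul] <;> omega
      · have hwz : w z = (-1, 1) := by rw [← hwxz]; exact hd
        have hx' := hwray x
        rw [hd] at hx'
        have hz' := hwray z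
        rw [hwz] at hz'
        refine pair_clash E hP (-1, 1) (Or.inr (Or.inr (Or.inl rfl))) x z hxz (z.1 - x.1) ?_ hx' hz'
        rw [Prod.ext_iff]
        constructor <;>
          simp only [Prod.fst_add, Prod.snd_add, Prod.smul_fst, Prod.smul_snd,
            smul_eq_mul] <;> omega
    have htwo : w p = w q ∨ w p = w r ∨ w q = w r := by
      rcases hwp with h1 | h1 <;> rcases hwq with h2 | h2 <;> rcases hwr with h3 | h3 <;>
        simp [h1, h2, h3]
    rcases htwo with he | he | he
    · exact hclash p q hpq (by omega) hwp he
    · exact hclash p r hpr (by omega) hwp he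
    · exact hclash q r hqr (by omega) hwq he
end S17

theorem stmt_17 :
    -- Finite statement on the 9-point configuration:
    (∀ E : ℝ × ℝ → ℝ × ℝ → Prop,
      (∀ p q, E p q → E q p) →
      (∀ p, ¬ E p p) →
      (∀ p q, E p q → p ∈ nineSet ∧ q ∈ nineSet) →
      PlaneGraph E →
      (∀ p, {q | E p q}.ncard ≤ 3) →
      ∃ p ∈ ({(1, 0), (0, 1), (-1, 0), (0, -1)} : Set (ℝ × ℝ)),
        ¬ E (0, 0) p ∧
        ∀ r ∈ nineSet, r ≠ (0, 0) → r ≠ p →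
          1 + Real.sqrt 2 ≤ ed (0, 0) r + ed r p) ∧
    -- Hence: any plane degree-3 graph on the infinite square lattice has
    -- stretch factor at least 1 + √2.
    (∀ E : ℝ × ℝ → ℝ × ℝ → Prop,
      (∀ p q, E p q → E q p) →
      (∀ p, ¬ E p p) →
      (∀ p q, E p q → p ∈ sqLattice ∧ q ∈ sqLattice) →
      PlaneGraph E →
      (∀ p, {q | E p q}.ncard ≤ 3) →
      ∃ u ∈ sqLattice, ∃ v ∈ sqLattice, u ≠ v ∧
        ∀ xs : List (ℝ × ℝ), IsPath E u v xs →
          (1 + Real.sqrt 2) * ed u v ≤ pathLen xs) := by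
  constructor
  · intro E hsymm hirr hV hP hdeg
    exact S17.part1 E hV hdeg
  · intro E hsymm hirr hV hP hdeg
    obtain ⟨u', v', huv, hnE⟩ := S17.exists_missing_unit E hV hP hdeg
    have hed : ed (S17.ii u') (S17.ii v') = 1 := by
      rw [S17.ed_ii]
      have h' : (u'.1 - v'.1) ^ 2 + (u'.2 - v'.2) ^ 2 = 1 := by nlinarith [huv]
      have hcast : ((u'.1 - v'.1 : ℤ) : ℝ) ^ 2 + ((u'.2 - v'.2 : ℤ) : ℝ) ^ 2 = 1 := by
        exact_mod_cast congrArg (fun z : ℤ => (z : ℝ)) h'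
      rw [hcast, Real.sqrt_one]
    have hneuv : u' ≠ v' := by
      intro h
      subst h
      simp at huv
    refine ⟨S17.ii u', S17.ii_mem _, S17.ii v', S17.ii_mem _, S17.ii_ne hneuv, ?_⟩
    intro xs hxs
    obtain ⟨hh, hl, hc⟩ := hxs
    match xs with
    | [] => simp at hh
    | [x] =>
        simp only [List.head?_cons, Option.some.injEq] at hh
        simp only [List.getLast?_singleton, Option.some.injEq] at hl
        exact absurd (hh.symm.trans hl) (S17.ii_ne hneuv)
    | x :: y :: rest =>
        simp only [List.head?_cons, Option.some.injEq] at hh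
        subst hh
        rw [List.getLast?_cons_cons] at hl
        have hExy : E (S17.ii u') y := (List.isChain_cons_cons.1 hc).1
        obtain ⟨m, n, rfl⟩ := (hV _ _ hExy).2
        have hyi : ((m : ℝ), (n : ℝ)) = S17.ii (m, n) := rfl
        rw [hyi] at hExy hl ⊢
        have hru : (m, n) ≠ u' := by
          intro h
          rw [h] at hExy
          exact hirr _ hExy
        have hrv : (m, n) ≠ v' := by
          intro h
          rw [h] at hExy
          exact hnE hExy
        have hell := S17.ell u' v' (m, n) huv hru hrv
        have htail : ed (S17.ii (m, n)) (S17.ii v') ≤ pathLen (S17.ii (m, n) :: rest) :=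
          S17.pathLen_ge _ _ _ rfl hl
        rw [pathLen, hed, mul_one]
        linarith
end
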